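/- arXiv:1903.03751 — 2 statements merged into one kernel-verified Lean document; each statement's English description precedes it below -/
import Mathlib

section
/- Let d ∈ ℕ, σ, b > 0, and let φ be the Gaussian density on ℝ^d and (P_t)_{t≥0} the Mehler (Ornstein–Uhlenbeck) semigroup. Let F : ℝ^d → ℂ be continuously differentiable and suppose there exist c₀ > 0 and n₀ ∈ ℕ such that |∇F(z)| ≤ c₀(1+|z|)^{n₀} for all z ∈ ℝ^d. Then there exists a constant C > 0 (depending only on c₀, n₀, d, b, σ) such that for all t ≥ 0 and x ∈ ℝ^d, | P_t F(x) − ∫_{ℝ^d} F(y) φ(y) dy | ≤ C e^{−bt} (1+|x|)^{n₀+1}. -/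
open MeasureTheory

/-- Real Gaussian is integrable on a Euclidean space. -/
lemma aux_gauss_integrable (d : ℕ) (c : ℝ) (hc : 0 < c) :
    Integrable (fun y : EuclideanSpace ℝ (Fin d) => Real.exp (-c * ‖y‖ ^ 2)) := by
  have h := (GaussianFourier.integrable_cexp_neg_mul_sq_norm_add (V := EuclideanSpace ℝ (Fin d))
    (b := (c : ℂ)) (by simpa using hc) 0 0).norm
  have : (fun v : EuclideanSpace ℝ (Fin d) =>
      ‖Complex.exp (-(c : ℂ) * (‖v‖ : ℂ) ^ 2 + 0 * (inner ℝ (0 : EuclideanSpace ℝ (Fin d)) v : ℝ))‖)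
      = fun y : EuclideanSpace ℝ (Fin d) => Real.exp (-c * ‖y‖ ^ 2) := by
    funext v
    have hcast : (-(c : ℂ) * (‖v‖ : ℂ) ^ 2
        + 0 * ((inner ℝ (0 : EuclideanSpace ℝ (Fin d)) v : ℝ) : ℂ))
        = ((-c * ‖v‖ ^ 2 : ℝ) : ℂ) := by push_cast; ring
    rw [Complex.norm_exp, hcast, Complex.ofReal_re]
  rwa [this] at h

/-- Polynomial times Gaussian is integrable on a Euclidean space. -/
lemma aux_integrable (d : ℕ) (c : ℝ) (hc : 0 < c) (k : ℕ) :
    Integrable (fun y : EuclideanSpace ℝ (Fin d) =>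
      (1 + ‖y‖) ^ k * Real.exp (-c * ‖y‖ ^ 2)) := by
  have base := (aux_gauss_integrable d (c / 2) (half_pos hc)).const_mul
    ((k.factorial : ℝ) * Real.exp (1 + 1 / (2 * c)))
  refine base.mono' ?_ ?_
  · exact (((continuous_const.add continuous_norm).pow k).mul
      ((continuous_const.mul (continuous_norm.pow 2)).rexp)).aestronglyMeasurable
  · filter_upwards with y
    set r := ‖y‖ with hr
    have hr0 : 0 ≤ r := norm_nonneg _
    have h1 : (1 + r) ^ k ≤ (k.factorial : ℝ) * Real.exp (1 + r) := by
      have := Real.pow_div_factorial_le_exp (x := 1 + r) (by linarith) k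
      have hkpos : (0 : ℝ) < (k.factorial : ℝ) := by positivity
      calc (1 + r) ^ k = (1 + r) ^ k / (k.factorial : ℝ) * (k.factorial : ℝ) := by
            field_simp
        _ ≤ Real.exp (1 + r) * (k.factorial : ℝ) := by
            exact mul_le_mul_of_nonneg_right this (le_of_lt hkpos)
        _ = (k.factorial : ℝ) * Real.exp (1 + r) := by ring
    have h2 : Real.exp (1 + r) * Real.exp (-c * r ^ 2)
        ≤ Real.exp (1 + 1 / (2 * c)) * Real.exp (-(c / 2) * r ^ 2) := by
      rw [← Real.exp_add, ← Real.exp_add]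
      apply Real.exp_le_exp.2
      have hkey : 2 * c * (r - (c / 2) * r ^ 2) ≤ 1 := by nlinarith [sq_nonneg (c * r - 1)]
      have h2c : (0:ℝ) < 2 * c := by linarith
      have : r - (c / 2) * r ^ 2 ≤ 1 / (2 * c) := by
        rw [le_div_iff₀ h2c]; linarith
      linarith
    have hnn : 0 ≤ (1 + r) ^ k * Real.exp (-c * r ^ 2) := by positivity
    rw [Real.norm_of_nonneg hnn]
    calc (1 + r) ^ k * Real.exp (-c * r ^ 2)
        ≤ ((k.factorial : ℝ) * Real.exp (1 + r)) * Real.exp (-c * r ^ 2) := by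
          exact mul_le_mul_of_nonneg_right h1 (Real.exp_nonneg _)
      _ = (k.factorial : ℝ) * (Real.exp (1 + r) * Real.exp (-c * r ^ 2)) := by ring
      _ ≤ (k.factorial : ℝ) * (Real.exp (1 + 1 / (2 * c)) * Real.exp (-(c / 2) * r ^ 2)) := by
          have hkpos : (0 : ℝ) ≤ (k.factorial : ℝ) := by positivity
          exact mul_le_mul_of_nonneg_left h2 hkpos
      _ = (k.factorial : ℝ) * Real.exp (1 + 1 / (2 * c)) * Real.exp (-(c / 2) * r ^ 2) := by
          ring

set_option maxHeartbeats 1000000 in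
/-- For the Mehler (Ornstein–Uhlenbeck) semigroup with Gaussian density `φ` on
`ℝ^d`: for all `c₀ > 0` and `n₀ ∈ ℕ` there is a constant `C > 0` (depending
only on `c₀, n₀, d, b, σ`) such that for every `C¹` function `F : ℝ^d → ℂ` with
`|∇F(z)| ≤ c₀(1+|z|)^{n₀}`, all `t ≥ 0` and all `x`,
`|P_t F(x) − ∫ F y φ(y) dy| ≤ C e^{−bt} (1+|x|)^{n₀+1}`. -/
theorem stmt13 (d : ℕ) (hd : 0 < d) (σ b : ℝ) (hσ : 0 < σ) (hb : 0 < b)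
    (φ : EuclideanSpace ℝ (Fin d) → ℝ)
    (hφ : ∀ x, φ x = (b / (Real.pi * σ ^ 2)) ^ ((d : ℝ) / 2) *
        Real.exp (-(b / σ ^ 2) * ‖x‖ ^ 2))
    (P : ℝ → (EuclideanSpace ℝ (Fin d) → ℂ) → EuclideanSpace ℝ (Fin d) → ℂ)
    (hP : ∀ t G x, P t G x =
        ∫ y, G (Real.exp (-(b * t)) • x + Real.sqrt (1 - Real.exp (-(2 * b * t))) • y)
          * ((φ y : ℝ) : ℂ) ∂volume)
    (c₀ : ℝ) (hc₀ : 0 < c₀) (n₀ : ℕ) :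
    ∃ C : ℝ, 0 < C ∧
      ∀ F : EuclideanSpace ℝ (Fin d) → ℂ, ContDiff ℝ 1 F →
        (∀ z, ‖fderiv ℝ F z‖ ≤ c₀ * (1 + ‖z‖) ^ n₀) →
        ∀ t : ℝ, 0 ≤ t → ∀ x,
          ‖P t F x - ∫ y, F y * ((φ y : ℝ) : ℂ) ∂volume‖
            ≤ C * Real.exp (-(b * t)) * (1 + ‖x‖) ^ (n₀ + 1) := by
  set K : ℝ := (b / (Real.pi * σ ^ 2)) ^ ((d : ℝ) / 2) with hK
  set c : ℝ := b / σ ^ 2 with hc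
  have hcpos : 0 < c := by positivity
  have hKpos : 0 < K := by
    apply Real.rpow_pos_of_pos
    positivity
  have hφ' : ∀ y : EuclideanSpace ℝ (Fin d), φ y = K * Real.exp (-c * ‖y‖ ^ 2) := fun y => hφ y
  have hφnn : ∀ y : EuclideanSpace ℝ (Fin d), 0 ≤ φ y := fun y => by rw [hφ' y]; positivity
  set M : ℝ := ∫ y : EuclideanSpace ℝ (Fin d), (1 + ‖y‖) ^ (n₀ + 1) * (K * Real.exp (-c * ‖y‖ ^ 2)) with hM
  have hMint : Integrable (fun y : EuclideanSpace ℝ (Fin d) =>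
      (1 + ‖y‖) ^ (n₀ + 1) * (K * Real.exp (-c * ‖y‖ ^ 2))) := by
    have := (aux_integrable d c hcpos (n₀ + 1)).const_mul K
    refine this.congr ?_
    filter_upwards with y
    ring
  have hMnn : 0 ≤ M := by
    apply integral_nonneg
    intro y
    positivity
  have hφcont : Continuous φ := by
    have : φ = fun y => K * Real.exp (-c * ‖y‖ ^ 2) := funext hφ'
    rw [this]
    exact continuous_const.mul ((continuous_const.mul (continuous_norm.pow 2)).rexp)
  clear_value K c M
  refine ⟨c₀ * M + 1, by positivity, ?_⟩
  intro F hF hF' t ht x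
  have hFc : Continuous F := hF.continuous
  have hFd : ∀ z : EuclideanSpace ℝ (Fin d), DifferentiableAt ℝ F z := fun z => hF.differentiable one_ne_zero z
  -- mean value estimate along segments
  have key : ∀ z w : EuclideanSpace ℝ (Fin d), ‖F w - F z‖ ≤ c₀ * (1 + max ‖z‖ ‖w‖) ^ n₀ * ‖w - z‖ := by
    intro z w
    apply Convex.norm_image_sub_le_of_norm_fderiv_le (s := segment ℝ z w)
      (fun p _ => hFd p) ?_ (convex_segment z w)
      (left_mem_segment ℝ z w) (right_mem_segment ℝ z w)
    rintro p ⟨a1, a2, ha1, ha2, hsum, rfl⟩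
    have hp : ‖a1 • z + a2 • w‖ ≤ max ‖z‖ ‖w‖ := by
      calc ‖a1 • z + a2 • w‖ ≤ ‖a1 • z‖ + ‖a2 • w‖ := norm_add_le _ _
        _ = a1 * ‖z‖ + a2 * ‖w‖ := by
            rw [norm_smul, norm_smul, Real.norm_of_nonneg ha1, Real.norm_of_nonneg ha2]
        _ ≤ a1 * max ‖z‖ ‖w‖ + a2 * max ‖z‖ ‖w‖ := by
            gcongr
            · exact le_max_left _ _
            · exact le_max_right _ _
        _ = max ‖z‖ ‖w‖ := by rw [← add_mul, hsum, one_mul]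
    calc ‖fderiv ℝ F (a1 • z + a2 • w)‖ ≤ c₀ * (1 + ‖a1 • z + a2 • w‖) ^ n₀ := hF' _
      _ ≤ c₀ * (1 + max ‖z‖ ‖w‖) ^ n₀ := by gcongr
  -- growth bound on F
  have Fbound : ∀ z : EuclideanSpace ℝ (Fin d), ‖F z‖ ≤ ‖F 0‖ + c₀ * (1 + ‖z‖) ^ (n₀ + 1) := by
    intro z
    have h := key 0 z
    simp only [norm_zero, sub_zero, max_eq_right (norm_nonneg z)] at h
    have h2 : ‖F z‖ ≤ ‖F 0‖ + ‖F z - F 0‖ := by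
      calc ‖F z‖ = ‖F 0 + (F z - F 0)‖ := by ring_nf
        _ ≤ ‖F 0‖ + ‖F z - F 0‖ := norm_add_le _ _
    calc ‖F z‖ ≤ ‖F 0‖ + ‖F z - F 0‖ := h2
      _ ≤ ‖F 0‖ + c₀ * (1 + ‖z‖) ^ n₀ * ‖z‖ := by linarith
      _ ≤ ‖F 0‖ + c₀ * (1 + ‖z‖) ^ (n₀ + 1) := by
          have : c₀ * (1 + ‖z‖) ^ n₀ * ‖z‖ ≤ c₀ * ((1 + ‖z‖) ^ n₀ * (1 + ‖z‖)) := by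
            have hz : ‖z‖ ≤ 1 + ‖z‖ := by linarith [norm_nonneg z]
            nlinarith [pow_nonneg (by linarith [norm_nonneg z] : (0:ℝ) ≤ 1 + ‖z‖) n₀,
              norm_nonneg z, hc₀.le]
          rw [pow_succ]
          linarith
  set a : ℝ := Real.exp (-(b * t)) with ha
  set s : ℝ := Real.sqrt (1 - Real.exp (-(2 * b * t))) with hs
  have ha0 : 0 < a := Real.exp_pos _
  have ha1 : a ≤ 1 := Real.exp_le_one_iff.2 (by nlinarith)
  have he2 : Real.exp (-(2 * b * t)) = a ^ 2 := by
    rw [ha, ← Real.exp_nat_mul]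
    norm_num
    ring_nf
  have he2le : Real.exp (-(2 * b * t)) ≤ 1 := Real.exp_le_one_iff.2 (by nlinarith)
  have hs0 : 0 ≤ s := Real.sqrt_nonneg _
  have hs2 : s ^ 2 = 1 - Real.exp (-(2 * b * t)) := Real.sq_sqrt (by linarith)
  have hs1 : s ≤ 1 := by nlinarith
  have h1s : 1 - s ≤ a := by nlinarith
  set u : EuclideanSpace ℝ (Fin d) → EuclideanSpace ℝ (Fin d) := fun y => a • x + s • y with hu
  clear_value a s
  -- pointwise estimate
  have pointwise : ∀ y : EuclideanSpace ℝ (Fin d), ‖F (u y) - F y‖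
      ≤ c₀ * a * ((1 + ‖x‖) ^ (n₀ + 1) * (1 + ‖y‖) ^ (n₀ + 1)) := by
    intro y
    have hux : ‖u y‖ ≤ ‖x‖ + ‖y‖ := by
      calc ‖u y‖ ≤ ‖a • x‖ + ‖s • y‖ := norm_add_le _ _
        _ = a * ‖x‖ + s * ‖y‖ := by
            rw [norm_smul, norm_smul, Real.norm_of_nonneg ha0.le, Real.norm_of_nonneg hs0]
        _ ≤ ‖x‖ + ‖y‖ := by nlinarith [norm_nonneg x, norm_nonneg y]
    have hmax : max ‖y‖ ‖u y‖ ≤ ‖x‖ + ‖y‖ := by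
      apply max_le _ hux
      linarith [norm_nonneg x]
    have hdiff : ‖u y - y‖ ≤ a * (‖x‖ + ‖y‖) := by
      have : u y - y = a • x + (s - 1) • y := by
        rw [hu]
        simp only
        rw [sub_smul, one_smul]
        abel
      rw [this]
      calc ‖a • x + (s - 1) • y‖ ≤ ‖a • x‖ + ‖(s - 1) • y‖ := norm_add_le _ _
        _ = a * ‖x‖ + |s - 1| * ‖y‖ := by
            rw [norm_smul, norm_smul, Real.norm_of_nonneg ha0.le, Real.norm_eq_abs]
        _ = a * ‖x‖ + (1 - s) * ‖y‖ := by rw [abs_of_nonpos (by linarith), neg_sub]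
        _ ≤ a * ‖x‖ + a * ‖y‖ := by nlinarith [norm_nonneg y]
        _ = a * (‖x‖ + ‖y‖) := by ring
    have hxy1 : (0:ℝ) ≤ 1 + (‖x‖ + ‖y‖) := by positivity
    have hkey := key y (u y)
    calc ‖F (u y) - F y‖ ≤ c₀ * (1 + max ‖y‖ ‖u y‖) ^ n₀ * ‖u y - y‖ := hkey
      _ ≤ c₀ * (1 + (‖x‖ + ‖y‖)) ^ n₀ * (a * (‖x‖ + ‖y‖)) := by
          gcongr
      _ ≤ c₀ * (1 + (‖x‖ + ‖y‖)) ^ n₀ * (a * (1 + (‖x‖ + ‖y‖))) := by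
          gcongr c₀ * (1 + (‖x‖ + ‖y‖)) ^ n₀ * (a * ?_)
          linarith
      _ = c₀ * a * (1 + (‖x‖ + ‖y‖)) ^ (n₀ + 1) := by rw [pow_succ]; ring
      _ ≤ c₀ * a * ((1 + ‖x‖) * (1 + ‖y‖)) ^ (n₀ + 1) := by
          gcongr c₀ * a * ?_ ^ (n₀ + 1)
          nlinarith [norm_nonneg x, norm_nonneg y]
      _ = c₀ * a * ((1 + ‖x‖) ^ (n₀ + 1) * (1 + ‖y‖) ^ (n₀ + 1)) := by rw [mul_pow]
  -- integrability
  have int2 : Integrable (fun y : EuclideanSpace ℝ (Fin d) => F y * ((φ y : ℝ) : ℂ)) := by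
    have hg : Integrable (fun y : EuclideanSpace ℝ (Fin d) =>
        (‖F 0‖ + c₀ * (1 + ‖y‖) ^ (n₀ + 1)) * (K * Real.exp (-c * ‖y‖ ^ 2))) := by
      have h0 := (aux_integrable d c hcpos 0).const_mul (‖F 0‖ * K)
      have h1 := (aux_integrable d c hcpos (n₀ + 1)).const_mul (c₀ * K)
      refine (h0.add h1).congr ?_
      filter_upwards with y
      simp only [Pi.add_apply]
      ring
    refine hg.mono' ?_ ?_
    · apply Continuous.aestronglyMeasurable
      exact hFc.mul (Complex.continuous_ofReal.comp hφcont)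
    · filter_upwards with y
      rw [norm_mul, Complex.norm_real, Real.norm_of_nonneg (hφnn y), hφ' y]
      have h1 := Fbound y
      have h2 : (0:ℝ) ≤ K * Real.exp (-c * ‖y‖ ^ 2) := by positivity
      exact mul_le_mul_of_nonneg_right h1 h2
  have int1 : Integrable (fun y : EuclideanSpace ℝ (Fin d) => F (u y) * ((φ y : ℝ) : ℂ)) := by
    have hg : Integrable (fun y : EuclideanSpace ℝ (Fin d) =>
        (‖F 0‖ + (c₀ * (1 + ‖x‖) ^ (n₀ + 1)) * (1 + ‖y‖) ^ (n₀ + 1))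
          * (K * Real.exp (-c * ‖y‖ ^ 2))) := by
      have h0 := (aux_integrable d c hcpos 0).const_mul (‖F 0‖ * K)
      have h1 := (aux_integrable d c hcpos (n₀ + 1)).const_mul (c₀ * (1 + ‖x‖) ^ (n₀ + 1) * K)
      refine (h0.add h1).congr ?_
      filter_upwards with y
      simp only [Pi.add_apply]
      ring
    refine hg.mono' ?_ ?_
    · apply Continuous.aestronglyMeasurable
      refine (hFc.comp ?_).mul (Complex.continuous_ofReal.comp hφcont)
      rw [hu]
      exact continuous_const.add (continuous_const_smul s)
    · filter_upwards with y
      rw [norm_mul, Complex.norm_real, Real.norm_of_nonneg (hφnn y), hφ' y]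
      have h2 : (0:ℝ) ≤ K * Real.exp (-c * ‖y‖ ^ 2) := by positivity
      refine mul_le_mul_of_nonneg_right ?_ h2
      have hb1 := Fbound (u y)
      have hxy : ‖u y‖ ≤ ‖x‖ + ‖y‖ := by
        calc ‖u y‖ ≤ ‖a • x‖ + ‖s • y‖ := norm_add_le _ _
          _ = a * ‖x‖ + s * ‖y‖ := by
              rw [norm_smul, norm_smul, Real.norm_of_nonneg ha0.le, Real.norm_of_nonneg hs0]
          _ ≤ ‖x‖ + ‖y‖ := by nlinarith [norm_nonneg x, norm_nonneg y]
      have : (1 + ‖u y‖) ^ (n₀ + 1) ≤ ((1 + ‖x‖) * (1 + ‖y‖)) ^ (n₀ + 1) := by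
        gcongr
        nlinarith [norm_nonneg x, norm_nonneg y, norm_nonneg (u y), hxy,
          mul_nonneg (norm_nonneg x) (norm_nonneg y)]
      rw [mul_pow] at this
      calc ‖F (u y)‖ ≤ ‖F 0‖ + c₀ * (1 + ‖u y‖) ^ (n₀ + 1) := hb1
        _ ≤ ‖F 0‖ + (c₀ * (1 + ‖x‖) ^ (n₀ + 1)) * (1 + ‖y‖) ^ (n₀ + 1) := by
            have := mul_le_mul_of_nonneg_left this hc₀.le
            linarith
  -- rewrite the difference as a single integral
  have split : P t F x - ∫ y : EuclideanSpace ℝ (Fin d), F y * ((φ y : ℝ) : ℂ)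
      = ∫ y : EuclideanSpace ℝ (Fin d), (F (u y) - F y) * ((φ y : ℝ) : ℂ) := by
    have hPeq : P t F x
        = ∫ y : EuclideanSpace ℝ (Fin d), F (u y) * ((φ y : ℝ) : ℂ) := by
      rw [hP t F x]
      simp only [hu, ha, hs]
    rw [hPeq, ← integral_sub int1 int2]
    congr 1
    funext y
    ring
  rw [split]
  -- bound the integral
  have hbound : Integrable (fun y : EuclideanSpace ℝ (Fin d) =>
      (c₀ * a * (1 + ‖x‖) ^ (n₀ + 1)) * ((1 + ‖y‖) ^ (n₀ + 1) * (K * Real.exp (-c * ‖y‖ ^ 2)))) :=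
    hMint.const_mul _
  have step1 : ‖∫ y : EuclideanSpace ℝ (Fin d), (F (u y) - F y) * ((φ y : ℝ) : ℂ)‖
      ≤ ∫ y : EuclideanSpace ℝ (Fin d), (c₀ * a * (1 + ‖x‖) ^ (n₀ + 1))
          * ((1 + ‖y‖) ^ (n₀ + 1) * (K * Real.exp (-c * ‖y‖ ^ 2))) := by
    apply norm_integral_le_of_norm_le hbound
    filter_upwards with y
    rw [norm_mul, Complex.norm_real, Real.norm_of_nonneg (hφnn y), hφ' y]
    have h1 := pointwise y
    have h2 : (0:ℝ) ≤ K * Real.exp (-c * ‖y‖ ^ 2) := by positivity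
    calc ‖F (u y) - F y‖ * (K * Real.exp (-c * ‖y‖ ^ 2))
        ≤ (c₀ * a * ((1 + ‖x‖) ^ (n₀ + 1) * (1 + ‖y‖) ^ (n₀ + 1)))
            * (K * Real.exp (-c * ‖y‖ ^ 2)) := mul_le_mul_of_nonneg_right h1 h2
      _ = (c₀ * a * (1 + ‖x‖) ^ (n₀ + 1))
            * ((1 + ‖y‖) ^ (n₀ + 1) * (K * Real.exp (-c * ‖y‖ ^ 2))) := by ring
  have step2 : (∫ y : EuclideanSpace ℝ (Fin d), (c₀ * a * (1 + ‖x‖) ^ (n₀ + 1))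
      * ((1 + ‖y‖) ^ (n₀ + 1) * (K * Real.exp (-c * ‖y‖ ^ 2))))
      = (c₀ * a * (1 + ‖x‖) ^ (n₀ + 1)) * M := by
    rw [integral_const_mul, ← hM]
  have hα : (0:ℝ) ≤ a * (1 + ‖x‖) ^ (n₀ + 1) := by positivity
  calc ‖∫ y : EuclideanSpace ℝ (Fin d), (F (u y) - F y) * ((φ y : ℝ) : ℂ)‖
      ≤ (c₀ * a * (1 + ‖x‖) ^ (n₀ + 1)) * M := by rw [← step2]; exact step1
    _ ≤ (c₀ * M + 1) * a * (1 + ‖x‖) ^ (n₀ + 1) := by nlinarith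
end

section
/- Let ψ be a branching mechanism with parameters α, ρ, π such that there exists z > 0 with ψ(z) > 0, and assume Grey's condition. Let v̄ := sup{λ ≥ 0 : ψ(λ) = 0} (so v̄ ∈ (0,∞)). Then: (i) for every t > 0 there is a unique v̄_t ∈ (v̄, ∞) with ∫_{v̄_t}^∞ ψ(z)^{−1} dz = t; and (ii) there exist constants C, δ, t₀ > 0 such that 0 < v̄_t − v̄ ≤ C e^{−δ t} for all t ≥ t₀. -/
open MeasureTheory Set
section helpers
open Real

lemma st_exp_ge (x : ℝ) : 0 ≤ rexp (-x) - 1 + x := by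
  have := Real.add_one_le_exp (-x); linarith

lemma st_exp_le_lin (x : ℝ) (hx : 0 ≤ x) : rexp (-x) - 1 + x ≤ x := by
  have : rexp (-x) ≤ rexp 0 := Real.exp_le_exp.2 (by linarith)
  rw [Real.exp_zero] at this; linarith

lemma st_exp_le_quad (x : ℝ) (hx : 0 ≤ x) : rexp (-x) - 1 + x ≤ x ^ 2 / 2 := by
  set h : ℝ → ℝ := fun t => t ^ 2 / 2 + 1 - t - rexp (-t) with hh
  have hd : ∀ y : ℝ, HasDerivAt h (y - 1 + rexp (-y)) y := by
    intro y
    have h1 : HasDerivAt (fun t : ℝ => rexp (-t)) (-rexp (-y)) y := by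
      simpa using (hasDerivAt_neg' y).exp
    have h2 := (((hasDerivAt_pow 2 y).div_const 2).add_const 1).sub (hasDerivAt_id y)
    have h3 := h2.sub h1
    exact h3.congr_deriv (by ring)
  have hmono : MonotoneOn h (Ici (0:ℝ)) := by
    apply monotoneOn_of_deriv_nonneg (convex_Ici 0)
    · exact fun y _ => (hd y).continuousAt.continuousWithinAt
    · exact fun y _ => (hd y).differentiableAt.differentiableWithinAt
    · intro y hy
      rw [(hd y).deriv]
      have := Real.add_one_le_exp (-y); linarith
  have h0 : h 0 = 0 := by simp [hh]
  have := hmono (self_mem_Ici) hx hx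
  rw [h0] at this
  simp only [hh] at this
  linarith

/-- key pointwise bound for domination -/
lemma st_key_bound (z y c : ℝ) (hz : 0 ≤ z) (hy : 0 < y) (hzc : z ≤ c) :
    rexp (-(z * y)) - 1 + z * y ≤ max c (c ^ 2) * min y (y ^ 2) := by
  have hc : 0 ≤ c := le_trans hz hzc
  rcases le_total y 1 with h1 | h1
  · have hmin : min y (y ^ 2) = y ^ 2 := min_eq_right (by nlinarith)
    rw [hmin]
    have hq := st_exp_le_quad (z * y) (by positivity)
    have : (z * y) ^ 2 / 2 ≤ c ^ 2 * y ^ 2 := by nlinarith [mul_le_mul hzc hzc hz hc, sq_nonneg y, sq_nonneg (z * y)]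
    have hle : c ^ 2 ≤ max c (c ^ 2) := le_max_right _ _
    nlinarith
  · have hmin : min y (y ^ 2) = y := min_eq_left (by nlinarith)
    rw [hmin]
    have hl := st_exp_le_lin (z * y) (by positivity)
    have hle : c ≤ max c (c ^ 2) := le_max_left _ _
    nlinarith

/-- pointwise convexity of z ↦ exp(-(z*y)) - 1 + z*y -/
lemma st_conv_pt (x y a b w : ℝ) (ha : 0 ≤ a) (hb : 0 ≤ b) (hab : a + b = 1) :
    rexp (-((a * x + b * y) * w)) - 1 + (a * x + b * y) * w ≤
      a * (rexp (-(x * w)) - 1 + x * w) + b * (rexp (-(y * w)) - 1 + y * w) := by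
  have h := convexOn_exp.2 (Set.mem_univ (-(x * w))) (Set.mem_univ (-(y * w))) ha hb hab
  simp only [smul_eq_mul] at h
  have he : a * -(x * w) + b * -(y * w) = -((a * x + b * y) * w) := by ring
  rw [he] at h
  nlinarith

lemma st_K_int (pi : Measure ℝ)
    (hmom : ∫⁻ y in Set.Ioi (0 : ℝ), ENNReal.ofReal (min y (y ^ 2)) ∂pi < ⊤) :
    IntegrableOn (fun y => min y (y ^ 2)) (Set.Ioi 0) pi := by
  have hm : AEStronglyMeasurable (fun y : ℝ => min y (y ^ 2)) (pi.restrict (Set.Ioi 0)) :=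
    (continuous_id.min (continuous_pow 2)).aestronglyMeasurable
  have hnn : 0 ≤ᶠ[ae (pi.restrict (Set.Ioi 0))] fun y : ℝ => min y (y ^ 2) := by
    rw [Filter.EventuallyLE, ae_restrict_iff' measurableSet_Ioi]
    filter_upwards with y hy
    simp only [Pi.zero_apply]
    exact le_min (le_of_lt hy) (by positivity)
  refine ⟨hm, ?_⟩
  rw [hasFiniteIntegral_iff_ofReal hnn]
  exact hmom

lemma st_F_int (pi : Measure ℝ)
    (hmom : ∫⁻ y in Set.Ioi (0 : ℝ), ENNReal.ofReal (min y (y ^ 2)) ∂pi < ⊤)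
    (z : ℝ) (hz : 0 ≤ z) :
    IntegrableOn (fun y => rexp (-(z * y)) - 1 + z * y) (Set.Ioi 0) pi := by
  refine Integrable.mono' (((st_K_int pi hmom).const_mul (max z (z ^ 2)))) ?_ ?_
  · exact (Continuous.aestronglyMeasurable (by continuity))
  · rw [ae_restrict_iff' measurableSet_Ioi]
    filter_upwards with y hy
    rw [Real.norm_eq_abs, abs_of_nonneg (st_exp_ge _)]
    exact st_key_bound z y z hz hy le_rfl

lemma st_I_cont (pi : Measure ℝ)
    (hmom : ∫⁻ y in Set.Ioi (0 : ℝ), ENNReal.ofReal (min y (y ^ 2)) ∂pi < ⊤) :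
    ContinuousOn (fun z => ∫ y in Set.Ioi (0:ℝ), (rexp (-(z * y)) - 1 + z * y) ∂pi)
      (Set.Ioi 0) := by
  intro z₀ hz₀
  apply continuousWithinAt_of_dominated
    (bound := fun y => max (z₀ + 1) ((z₀ + 1) ^ 2) * min y (y ^ 2))
  · filter_upwards with z
    exact Continuous.aestronglyMeasurable (by continuity)
  · have h1 : ∀ᶠ z in nhdsWithin z₀ (Set.Ioi 0), z ∈ Set.Ioi (0:ℝ) :=
      eventually_mem_nhdsWithin
    have h2 : ∀ᶠ z in nhdsWithin z₀ (Set.Ioi 0), z < z₀ + 1 :=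
      eventually_nhdsWithin_of_eventually_nhds (Filter.Tendsto.eventually_lt_const
        (by linarith [(Set.mem_Ioi.1 hz₀).le]) Filter.tendsto_id)
    filter_upwards [h1, h2] with z hz hz1
    rw [ae_restrict_iff' measurableSet_Ioi]
    filter_upwards with y hy
    rw [Real.norm_eq_abs, abs_of_nonneg (st_exp_ge _)]
    exact st_key_bound z y (z₀ + 1) (le_of_lt hz) hy (le_of_lt hz1)
  · exact (st_K_int pi hmom).const_mul _
  · filter_upwards with y
    exact Continuous.continuousWithinAt (by continuity)

lemma st_ratio_zero (pi : Measure ℝ)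
    (hmom : ∫⁻ y in Set.Ioi (0 : ℝ), ENNReal.ofReal (min y (y ^ 2)) ∂pi < ⊤) :
    Filter.Tendsto (fun z => (∫ y in Set.Ioi (0:ℝ), (rexp (-(z * y)) - 1 + z * y) ∂pi) / z)
      (nhdsWithin 0 (Set.Ioi 0)) (nhds 0) := by
  have heq : ∀ z : ℝ, (∫ y in Set.Ioi (0:ℝ), (rexp (-(z * y)) - 1 + z * y) ∂pi) / z
      = ∫ y in Set.Ioi (0:ℝ), (rexp (-(z * y)) - 1 + z * y) / z ∂pi := by
    intro z; rw [integral_div]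
  simp only [heq]
  rw [show nhds (0:ℝ) = nhds (∫ y in Set.Ioi (0:ℝ), (0:ℝ) ∂pi) by simp]
  apply tendsto_integral_filter_of_dominated_convergence (fun y => min y (y ^ 2))
  · filter_upwards with z
    exact Continuous.aestronglyMeasurable (by continuity)
  · have h1 : ∀ᶠ z in nhdsWithin 0 (Set.Ioi 0), z ∈ Set.Ioi (0:ℝ) :=
      eventually_mem_nhdsWithin
    have h2 : ∀ᶠ z : ℝ in nhdsWithin 0 (Set.Ioi 0), z < 1 :=
      eventually_nhdsWithin_of_eventually_nhds (Filter.Tendsto.eventually_lt_const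
        (by norm_num) Filter.tendsto_id)
    filter_upwards [h1, h2] with z hz hz1
    rw [ae_restrict_iff' measurableSet_Ioi]
    filter_upwards with y hy
    have hz0 : (0:ℝ) < z := hz
    have hy0 : (0:ℝ) < y := hy
    rw [Real.norm_eq_abs, abs_of_nonneg (div_nonneg (st_exp_ge _) hz0.le)]
    rw [div_le_iff₀ hz0]
    rcases le_total y 1 with h1' | h1'
    · have hmin : min y (y ^ 2) = y ^ 2 := min_eq_right (by nlinarith)
      rw [hmin]
      have hq := st_exp_le_quad (z * y) (mul_nonneg hz0.le hy0.le)
      nlinarith [sq_nonneg y, sq_nonneg (z*y)]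
    · have hmin : min y (y ^ 2) = y := min_eq_left (by nlinarith)
      rw [hmin]
      have hl := st_exp_le_lin (z * y) (mul_nonneg hz0.le hy0.le)
      nlinarith
  · exact st_K_int pi hmom
  · rw [ae_restrict_iff' measurableSet_Ioi]
    filter_upwards with y hy
    apply squeeze_zero' (g := fun z => z * (y ^ 2 / 2))
    · filter_upwards [eventually_mem_nhdsWithin] with z (hz : (0:ℝ) < z)
      exact div_nonneg (st_exp_ge _) hz.le
    · filter_upwards [eventually_mem_nhdsWithin] with z (hz : (0:ℝ) < z)
      rw [div_le_iff₀ hz]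
      have hy0 : (0:ℝ) < y := hy
      have hq := st_exp_le_quad (z * y) (mul_nonneg hz.le hy0.le)
      nlinarith [sq_nonneg (z*y)]
    · have : Filter.Tendsto (fun z : ℝ => z * (y ^ 2 / 2)) (nhdsWithin 0 (Set.Ioi 0)) (nhds 0) := by
        apply Filter.Tendsto.mono_left ?_ nhdsWithin_le_nhds
        have : Continuous (fun z : ℝ => z * (y ^ 2 / 2)) := continuous_id.mul continuous_const
        have := this.tendsto (0:ℝ)
        simpa using this
      exact this

lemma st_convex (a0 r0 : ℝ) (pi : Measure ℝ) (hr : 0 ≤ r0)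
    (hmom : ∫⁻ y in Set.Ioi (0 : ℝ), ENNReal.ofReal (min y (y ^ 2)) ∂pi < ⊤)
    (ψ : ℝ → ℝ)
    (hψ : ∀ z : ℝ, 0 ≤ z → ψ z = -a0 * z + r0 * z ^ 2
        + ∫ y in Set.Ioi (0 : ℝ), (rexp (-(z * y)) - 1 + z * y) ∂pi) :
    ConvexOn ℝ (Set.Ici 0) ψ := by
  refine ⟨convex_Ici 0, fun x hx y hy a b ha hb hab => ?_⟩
  have hx0 : (0:ℝ) ≤ x := hx
  have hy0 : (0:ℝ) ≤ y := hy
  have hcomb : (0:ℝ) ≤ a * x + b * y := by positivity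
  simp only [smul_eq_mul]
  rw [hψ x hx0, hψ y hy0, hψ _ hcomb]
  have hIx := st_F_int pi hmom x hx0
  have hIy := st_F_int pi hmom y hy0
  have hIc := st_F_int pi hmom _ hcomb
  have hint : (∫ w in Set.Ioi (0:ℝ), (rexp (-((a * x + b * y) * w)) - 1 + (a * x + b * y) * w) ∂pi)
      ≤ a * (∫ w in Set.Ioi (0:ℝ), (rexp (-(x * w)) - 1 + x * w) ∂pi)
        + b * (∫ w in Set.Ioi (0:ℝ), (rexp (-(y * w)) - 1 + y * w) ∂pi) := by
    rw [← integral_const_mul, ← integral_const_mul, ← integral_add (hIx.const_mul a) (hIy.const_mul b)]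
    apply setIntegral_mono_on hIc ((hIx.const_mul a).add (hIy.const_mul b)) measurableSet_Ioi
    intro w hw
    exact st_conv_pt x y a b w ha hb hab
  have hsq : r0 * (a * x + b * y) ^ 2 ≤ a * (r0 * x ^ 2) + b * (r0 * y ^ 2) := by
    have hb' : b = 1 - a := by linarith
    have key : a * (r0 * x ^ 2) + b * (r0 * y ^ 2) - r0 * (a * x + b * y) ^ 2
        = r0 * (a * b * (x - y) ^ 2) := by rw [hb']; ring
    linarith [mul_nonneg hr (mul_nonneg (mul_nonneg ha hb) (sq_nonneg (x - y)))]
  have hlin : -a0 * (a * x + b * y) = a * (-a0 * x) + b * (-a0 * y) := by ring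
  nlinarith [hint, hsq]
end helpers

set_option maxHeartbeats 1000000

/-- Let `ψ` be a branching mechanism with `ψ(z) > 0` for some `z > 0`,
satisfying Grey's condition, and let `v̄ = sup{λ ≥ 0 : ψ(λ) = 0} ∈ (0,∞)`.
Then: (i) for every `t > 0` there is a unique `v̄_t ∈ (v̄,∞)` with
`∫_{v̄_t}^∞ ψ(z)⁻¹ dz = t`; (ii) there are `C, δ, t₀ > 0` such that
`0 < v̄_t − v̄ ≤ C e^{−δt}` for all `t ≥ t₀`. -/
theorem stmt16 (α ρ : ℝ) (π : Measure ℝ)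
    (hα : 0 < α) (hρ : 0 ≤ ρ)
    (hmom : ∫⁻ y in Set.Ioi (0 : ℝ), ENNReal.ofReal (min y (y ^ 2)) ∂π < ⊤)
    (ψ : ℝ → ℝ)
    (hψ : ∀ z : ℝ, 0 ≤ z → ψ z = -α * z + ρ * z ^ 2
        + ∫ y in Set.Ioi (0 : ℝ), (Real.exp (-(z * y)) - 1 + z * y) ∂π)
    (hpos : ∃ z : ℝ, 0 < z ∧ 0 < ψ z)
    (hGrey : ∃ z' : ℝ, 0 < z' ∧ (∀ z : ℝ, z' < z → 0 < ψ z) ∧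
        IntegrableOn (fun z : ℝ => (ψ z)⁻¹) (Set.Ioi z') volume)
    (vbar : ℝ) (hvbar : vbar = sSup {l : ℝ | 0 ≤ l ∧ ψ l = 0}) :
    (∀ t : ℝ, 0 < t →
        ∃! v : ℝ, vbar < v ∧ ∫ z in Set.Ioi v, (ψ z)⁻¹ = t)
    ∧ ∃ C δ t₀ : ℝ, 0 < C ∧ 0 < δ ∧ 0 < t₀ ∧
        ∀ t : ℝ, t₀ ≤ t → ∀ v : ℝ,
          vbar < v → (∫ z in Set.Ioi v, (ψ z)⁻¹) = t →
            0 < v - vbar ∧ v - vbar ≤ C * Real.exp (-δ * t) := by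
  obtain ⟨z', hz'0, hz'gt, hz'int⟩ := hGrey
  have hψ0 : ψ 0 = 0 := by rw [hψ 0 le_rfl]; simp
  have h0S : (0:ℝ) ∈ {l : ℝ | 0 ≤ l ∧ ψ l = 0} := ⟨le_rfl, hψ0⟩
  have hSb : ∀ l ∈ {l : ℝ | 0 ≤ l ∧ ψ l = 0}, l ≤ z' := by
    intro l hl
    by_contra h
    push_neg at h
    exact absurd hl.2 (ne_of_gt (hz'gt l h))
  have hSbdd : BddAbove {l : ℝ | 0 ≤ l ∧ ψ l = 0} := ⟨z', hSb⟩
  have hSne : Set.Nonempty {l : ℝ | 0 ≤ l ∧ ψ l = 0} := ⟨0, h0S⟩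
  have hvz' : vbar ≤ z' := by rw [hvbar]; exact csSup_le hSne hSb
  have hv0 : 0 ≤ vbar := by rw [hvbar]; exact le_csSup hSbdd h0S
  -- continuity of ψ on (0, ∞)
  have hcont : ContinuousOn ψ (Set.Ioi 0) := by
    have hg : ContinuousOn (fun z => -α * z + ρ * z ^ 2
        + ∫ y in Set.Ioi (0:ℝ), (Real.exp (-(z * y)) - 1 + z * y) ∂π) (Set.Ioi 0) :=
      (Continuous.continuousOn ((continuous_const.mul continuous_id).add
        (continuous_const.mul (continuous_pow 2)))).add (st_I_cont π hmom)
    exact hg.congr (fun z hz => hψ z (le_of_lt hz))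
  -- ψ z / z → -α as z → 0+
  have hratio : Filter.Tendsto (fun z => ψ z / z) (nhdsWithin 0 (Set.Ioi 0)) (nhds (-α)) := by
    have h1 := st_ratio_zero π hmom
    have h2 : Filter.Tendsto (fun z : ℝ => -α + ρ * z) (nhdsWithin 0 (Set.Ioi 0)) (nhds (-α)) := by
      have hcc : Continuous (fun z : ℝ => -α + ρ * z) := continuous_const.add (continuous_const.mul continuous_id)
      have := (hcc.tendsto 0).mono_left (nhdsWithin_le_nhds (s := Set.Ioi 0))
      simpa using this
    have h3 := h2.add h1
    rw [add_zero] at h3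
    apply h3.congr'
    filter_upwards [eventually_mem_nhdsWithin] with z (hz : (0:ℝ) < z)
    rw [hψ z hz.le]
    field_simp
  -- a negative value of ψ
  obtain ⟨a, ha0, haneg⟩ : ∃ a : ℝ, 0 < a ∧ ψ a < 0 := by
    have hev := hratio.eventually_lt_const (show -α < -α/2 by linarith)
    obtain ⟨a, ha1, ha2⟩ := (hev.and eventually_mem_nhdsWithin).exists
    refine ⟨a, ha2, ?_⟩
    have ha0 : (0:ℝ) < a := ha2
    have : ψ a / a < 0 := by linarith
    rcases div_neg_iff.1 this with ⟨h1, h2⟩ | ⟨h1, h2⟩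
    · linarith
    · exact h1
  have haz' : a ≤ z' := by
    by_contra h
    push_neg at h
    linarith [hz'gt a h]
  set b := z' + 1 with hb
  have hψb : 0 < ψ b := hz'gt b (by linarith)
  -- root r via IVT
  obtain ⟨r, hrmem, hrzero⟩ := intermediate_value_Icc (show a ≤ b by linarith)
    (hcont.mono (fun x hx => lt_of_lt_of_le ha0 hx.1)) ⟨haneg.le, hψb.le⟩
  have hr0 : 0 < r := lt_of_lt_of_le ha0 hrmem.1
  have hrS : r ∈ {l : ℝ | 0 ≤ l ∧ ψ l = 0} := ⟨hr0.le, hrzero⟩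
  have hrz' : r ≤ z' := hSb r hrS
  have hrv : r ≤ vbar := by rw [hvbar]; exact le_csSup hSbdd hrS
  have har : a < r := by
    rcases lt_or_eq_of_le hrmem.1 with h | h
    · exact h
    · exfalso; rw [← h] at hrzero; linarith
  have hvpos : 0 < vbar := lt_of_lt_of_le hr0 hrv
  have hav : a < vbar := lt_of_lt_of_le har hrv
  -- ψ vbar = 0
  have hψv : ψ vbar = 0 := by
    set Z := Set.Icc r z' ∩ ψ ⁻¹' {0} with hZ
    have hZclosed : IsClosed Z :=
      (hcont.mono (fun x hx => lt_of_lt_of_le hr0 hx.1)).preimage_isClosed_of_isClosed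
        isClosed_Icc isClosed_singleton
    have hrZ : r ∈ Z := ⟨⟨le_rfl, hrz'⟩, hrzero⟩
    have hZne : Z.Nonempty := ⟨r, hrZ⟩
    have hZbdd : BddAbove Z := ⟨z', fun x hx => hx.1.2⟩
    have hZmem := hZclosed.csSup_mem hZne hZbdd
    have hZS : Z ⊆ {l : ℝ | 0 ≤ l ∧ ψ l = 0} := fun x hx => ⟨le_trans hr0.le hx.1.1, hx.2⟩
    have hle1 : sSup Z ≤ vbar := by rw [hvbar]; exact csSup_le_csSup hSbdd hZne hZS
    have hle2 : vbar ≤ sSup Z := by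
      rw [hvbar]
      apply csSup_le hSne
      intro x hx
      rcases le_total x r with h | h
      · exact le_trans h (le_csSup hZbdd hrZ)
      · exact le_csSup hZbdd ⟨⟨h, hSb x hx⟩, hx.2⟩
    have heq := le_antisymm hle2 hle1
    rw [heq]
    simpa using hZmem.2
  -- positivity of ψ on (vbar, ∞)
  have hψpos : ∀ z, vbar < z → 0 < ψ z := by
    intro z hz
    rcases lt_trichotomy (ψ z) 0 with h | h | h
    · exfalso
      have hz0 : 0 < z := lt_trans hvpos hz
      have hzz' : z ≤ z' := by
        by_contra hc; push_neg at hc; linarith [hz'gt z hc]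
      obtain ⟨r', hr'mem, hr'zero⟩ := intermediate_value_Icc (show z ≤ b by linarith)
        (hcont.mono (fun x hx => lt_of_lt_of_le hz0 hx.1)) ⟨h.le, hψb.le⟩
      have : r' ≤ vbar := by
        rw [hvbar]; exact le_csSup hSbdd ⟨le_trans hz0.le hr'mem.1, hr'zero⟩
      linarith [hr'mem.1]
    · exfalso
      have : z ≤ vbar := by
        rw [hvbar]; exact le_csSup hSbdd ⟨(lt_trans hvpos hz).le, h⟩
      linarith
    · exact h
  have hconv := st_convex α ρ π hρ hmom ψ hψ
  set m := (0 - ψ a) / (vbar - a) with hm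
  have hmpos : 0 < m := div_pos (by linarith) (by linarith)
  have hlow : ∀ z, vbar < z → m * (z - vbar) ≤ ψ z := by
    intro z hz
    have hz0 : (0:ℝ) ≤ z := (lt_trans hvpos hz).le
    have hslope := hconv.slope_mono_adjacent (Set.mem_Ici.2 ha0.le) (Set.mem_Ici.2 hz0) hav hz
    rw [hψv] at hslope
    rw [← hm] at hslope
    rw [sub_zero] at hslope
    exact (le_div_iff₀ (by linarith : (0:ℝ) < z - vbar)).1 hslope
  have hbv : vbar < b := lt_of_le_of_lt hvz' (by linarith)
  set M := ψ b / (b - vbar) with hM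
  have hMpos : 0 < M := div_pos hψb (by linarith)
  have hup' : ∀ z, vbar < z → z ≤ b → ψ z ≤ M * (z - vbar) := by
    intro z hz hzb
    rcases eq_or_lt_of_le hzb with h | h
    · rw [h, hM, div_mul_cancel₀ _ (by linarith : b - vbar ≠ 0)]
    · have hz0 : (0:ℝ) ≤ z := (lt_trans hvpos hz).le
      have hb0 : (0:ℝ) ≤ b := by linarith
      have hslope := hconv.slope_mono_adjacent (Set.mem_Ici.2 hv0) (Set.mem_Ici.2 hb0) hz h
      rw [hψv, sub_zero] at hslope
      have h2 := (div_le_div_iff₀ (by linarith : (0:ℝ) < z - vbar)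
        (by linarith : (0:ℝ) < b - z)).1 hslope
      rw [hM, div_mul_eq_mul_div, le_div_iff₀ (by linarith : (0:ℝ) < b - vbar)]
      nlinarith
  -- integrability
  have hIccCont : ∀ u w : ℝ, vbar < u → ContinuousOn (fun z => (ψ z)⁻¹) (Set.Icc u w) := by
    intro u w hu
    apply ContinuousOn.inv₀ (hcont.mono (fun x hx => lt_of_lt_of_le (lt_trans hvpos hu) hx.1))
    intro x hx
    exact ne_of_gt (hψpos x (lt_of_lt_of_le hu hx.1))
  have hIoc : ∀ u w : ℝ, vbar < u → IntegrableOn (fun z => (ψ z)⁻¹) (Set.Ioc u w) volume := by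
    intro u w hu
    exact ((hIccCont u w hu).integrableOn_Icc).mono_set Set.Ioc_subset_Icc_self
  have hIoi : ∀ v : ℝ, vbar < v → IntegrableOn (fun z => (ψ z)⁻¹) (Set.Ioi v) volume := by
    intro v hv
    rw [← Set.Ioc_union_Ioi_eq_Ioi (le_max_left v z')]
    exact (hIoc v (max v z') hv).union
      (hz'int.mono_set (Set.Ioi_subset_Ioi (le_max_right v z')))
  set T := fun v : ℝ => ∫ z in Set.Ioi v, (ψ z)⁻¹ with hT
  have hsplit : ∀ u w : ℝ, vbar < u → u ≤ w →
      T u = (∫ z in Set.Ioc u w, (ψ z)⁻¹) + T w := by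
    intro u w hu huw
    show (∫ z in Set.Ioi u, (ψ z)⁻¹) = _
    rw [← Set.Ioc_union_Ioi_eq_Ioi huw,
      setIntegral_union (Set.Ioc_disjoint_Ioi le_rfl) measurableSet_Ioi
        (hIoc u w hu) (hIoi w (lt_of_lt_of_le hu huw))]
  have hTnn : ∀ v, vbar < v → 0 ≤ T v := fun v hv =>
    setIntegral_nonneg measurableSet_Ioi
      (fun z hz => inv_nonneg.2 (hψpos z (lt_trans hv hz)).le)
  have hchunkpos : ∀ u w : ℝ, vbar < u → u < w →
      0 < ∫ z in Set.Ioc u w, (ψ z)⁻¹ := by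
    intro u w hu huw
    obtain ⟨x₀, hx₀mem, hx₀max⟩ := (isCompact_Icc (a := u) (b := w)).exists_isMaxOn
      (Set.nonempty_Icc.2 huw.le)
      (hcont.mono (fun x hx => lt_of_lt_of_le (lt_trans hvpos hu) hx.1))
    have hB : 0 < ψ x₀ := hψpos x₀ (lt_of_lt_of_le hu hx₀mem.1)
    have hmono2 : ∫ z in Set.Ioc u w, (ψ x₀)⁻¹ ≤ ∫ z in Set.Ioc u w, (ψ z)⁻¹ := by
      apply setIntegral_mono_on (integrableOn_const ((by
        rw [Real.volume_Ioc]; exact ENNReal.ofReal_ne_top))) (hIoc u w hu) measurableSet_Ioc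
      intro z hz
      exact inv_anti₀ (hψpos z (lt_trans hu hz.1)) (hx₀max (Set.Ioc_subset_Icc_self hz))
    have hconst : (∫ _z in Set.Ioc u w, (ψ x₀)⁻¹) = (w - u) * (ψ x₀)⁻¹ := by
      rw [setIntegral_const, measureReal_def, Real.volume_Ioc, ENNReal.toReal_ofReal (by linarith), smul_eq_mul]
    have : (0:ℝ) < (w - u) * (ψ x₀)⁻¹ := mul_pos (by linarith) (inv_pos.2 hB)
    linarith [hmono2, hconst]
  have hanti : StrictAntiOn T (Set.Ioi vbar) := by
    intro u hu w hw huw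
    have h1 := hsplit u w hu huw.le
    have h2 := hchunkpos u w hu huw
    linarith
  -- log integral computation
  have hlogint : ∀ c v : ℝ, 0 < c → vbar < v → v ≤ b →
      (∫ z in Set.Ioc v b, (c * (z - vbar))⁻¹) =
        c⁻¹ * (Real.log (b - vbar) - Real.log (v - vbar)) := by
    intro c v hc hv hvb
    rw [← intervalIntegral.integral_of_le hvb]
    have hrw : ∀ z : ℝ, (c * (z - vbar))⁻¹ = c⁻¹ * (z - vbar)⁻¹ := fun z => by rw [mul_inv]
    simp only [hrw]
    rw [intervalIntegral.integral_const_mul]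
    rw [show (∫ x in v..b, (x - vbar)⁻¹) = ∫ x in v - vbar..b - vbar, x⁻¹ from
      intervalIntegral.integral_comp_sub_right (fun x => x⁻¹) vbar]
    rw [integral_inv_of_pos (by linarith) (by linarith),
      Real.log_div (by linarith) (by linarith)]
  have hIocRHS : ∀ c v : ℝ, 0 < c → vbar < v →
      IntegrableOn (fun z => (c * (z - vbar))⁻¹) (Set.Ioc v b) volume := by
    intro c v hc hv
    apply (ContinuousOn.integrableOn_Icc ?_).mono_set (Set.Ioc_subset_Icc_self)
    apply ContinuousOn.inv₀
    · exact Continuous.continuousOn (continuous_const.mul (continuous_id.sub continuous_const))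
    · intro x hx
      exact ne_of_gt (mul_pos hc (by linarith [hx.1]))
  have hup_int : ∀ v, vbar < v → v ≤ b →
      T v ≤ m⁻¹ * (Real.log (b - vbar) - Real.log (v - vbar)) + T b := by
    intro v hv hvb
    rw [hsplit v b hv hvb]
    have h1 : (∫ z in Set.Ioc v b, (ψ z)⁻¹) ≤ ∫ z in Set.Ioc v b, (m * (z - vbar))⁻¹ := by
      apply setIntegral_mono_on (hIoc v b hv) (hIocRHS m v hmpos hv) measurableSet_Ioc
      intro z hz
      exact inv_anti₀ (mul_pos hmpos (by linarith [hz.1])) (hlow z (lt_trans hv hz.1))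
    have h2 := hlogint m v hmpos hv hvb
    linarith
  have hlow_int : ∀ v, vbar < v → v ≤ b →
      M⁻¹ * (Real.log (b - vbar) - Real.log (v - vbar)) ≤ T v := by
    intro v hv hvb
    rw [hsplit v b hv hvb]
    have h1 : (∫ z in Set.Ioc v b, (M * (z - vbar))⁻¹) ≤ ∫ z in Set.Ioc v b, (ψ z)⁻¹ := by
      apply setIntegral_mono_on (hIocRHS M v hMpos hv) (hIoc v b hv) measurableSet_Ioc
      intro z hz
      exact inv_anti₀ (hψpos z (lt_trans hv hz.1)) (hup' z (lt_trans hv hz.1) hz.2)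
    have h2 := hlogint M v hMpos hv hvb
    have h3 := hTnn b hbv
    linarith
  -- tail tendsto
  have htail : Filter.Tendsto (fun n : ℕ => T (b + n)) Filter.atTop (nhds 0) := by
    have hmono : Monotone (fun n : ℕ => Set.Ioc b (b + (n:ℝ))) := by
      intro i j hij
      exact Set.Ioc_subset_Ioc_right (by linarith [(Nat.cast_le (α := ℝ)).2 hij])
    have hU : (⋃ n : ℕ, Set.Ioc b (b + (n:ℝ))) = Set.Ioi b := by
      ext x
      simp only [Set.mem_iUnion, Set.mem_Ioc, Set.mem_Ioi]
      constructor
      · rintro ⟨n, h1, _⟩; exact h1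
      · intro hx
        obtain ⟨n, hn⟩ := exists_nat_ge (x - b)
        exact ⟨n, hx, by linarith⟩
    have hten := tendsto_setIntegral_of_monotone (fun n : ℕ => measurableSet_Ioc) hmono
      (by rw [hU]; exact hIoi b hbv)
    rw [hU] at hten
    have h2 : ∀ n : ℕ, T (b + (n:ℝ)) = T b - ∫ z in Set.Ioc b (b + (n:ℝ)), (ψ z)⁻¹ := by
      intro n
      have := hsplit b (b + (n:ℝ)) hbv (by linarith [Nat.cast_nonneg (α := ℝ) n])
      linarith
    simp only [h2]
    have := (tendsto_const_nhds (x := T b) (f := Filter.atTop (α := ℕ))).sub hten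
    simpa [hT] using this
  constructor
  · -- part (i)
    intro t ht
    set v1 := vbar + (b - vbar) * Real.exp (-(M * t)) with hv1
    have hev1 : 0 < (b - vbar) * Real.exp (-(M * t)) := by
      have := Real.exp_pos (-(M * t)); nlinarith [sub_pos.2 hbv]
    have hv1v : vbar < v1 := by rw [hv1]; linarith
    have hv1b : v1 < b := by
      have h1 : Real.exp (-(M * t)) < 1 := Real.exp_lt_one_iff.2 (by nlinarith)
      rw [hv1]; nlinarith [sub_pos.2 hbv]
    have hTv1 : t ≤ T v1 := by
      have hli := hlow_int v1 hv1v hv1b.le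
      have hlog : Real.log (v1 - vbar) = Real.log (b - vbar) + (-(M * t)) := by
        rw [hv1, add_sub_cancel_left,
          Real.log_mul (by linarith [sub_pos.2 hbv] : b - vbar ≠ 0) (Real.exp_ne_zero _),
          Real.log_exp]
      rw [hlog] at hli
      have heq2 : M⁻¹ * (Real.log (b - vbar) - (Real.log (b - vbar) + -(M * t)))
          = M⁻¹ * (M * t) := by ring
      rw [heq2, inv_mul_cancel_left₀ (ne_of_gt hMpos)] at hli
      exact hli
    obtain ⟨n, hn⟩ : ∃ n : ℕ, T (b + (n:ℝ)) < t := (htail.eventually_lt_const ht).exists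
    set v2 := b + (n:ℝ) with hv2
    have hv2v : vbar < v2 := by rw [hv2]; linarith [Nat.cast_nonneg (α := ℝ) n]
    have hv12 : v1 ≤ v2 := by
      by_contra hc
      push_neg at hc
      have := hanti (Set.mem_Ioi.2 hv2v) (Set.mem_Ioi.2 hv1v) hc
      linarith
    -- continuity of T on [v1, v2]
    have hTcont : ContinuousOn T (Set.Icc v1 v2) := by
      have hcpos : 0 < m * (v1 - vbar) := mul_pos hmpos (by linarith)
      set c := m * (v1 - vbar) with hc
      have hkey : ∀ x ∈ Set.Ici v1, ∀ y ∈ Set.Ici v1, y ≤ x →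
          0 ≤ T y - T x ∧ T y - T x ≤ c⁻¹ * (x - y) := by
        intro x hx y hy hxy
        have hyv : vbar < y := lt_of_lt_of_le hv1v hy
        have hsp := hsplit y x hyv hxy
        have hch : 0 ≤ ∫ z in Set.Ioc y x, (ψ z)⁻¹ :=
          setIntegral_nonneg measurableSet_Ioc
            (fun z hz => inv_nonneg.2 (hψpos z (lt_trans hyv hz.1)).le)
        have h1 : (∫ z in Set.Ioc y x, (ψ z)⁻¹) ≤ ∫ _z in Set.Ioc y x, c⁻¹ := by
          apply setIntegral_mono_on (hIoc y x hyv) (integrableOn_const ((by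
            rw [Real.volume_Ioc]; exact ENNReal.ofReal_ne_top))) measurableSet_Ioc
          intro z hz
          apply inv_anti₀ hcpos
          calc c = m * (v1 - vbar) := hc
            _ ≤ m * (z - vbar) := by
                apply mul_le_mul_of_nonneg_left ?_ hmpos.le
                have := hz.1
                have hy1 : v1 ≤ y := hy
                linarith
            _ ≤ ψ z := hlow z (lt_trans hyv hz.1)
        have h2 : (∫ _z in Set.Ioc y x, (c⁻¹ : ℝ)) = (x - y) * c⁻¹ := by
          rw [setIntegral_const, measureReal_def, Real.volume_Ioc, ENNReal.toReal_ofReal (by linarith),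
            smul_eq_mul]
        constructor
        · linarith
        · rw [hsp]; rw [h2] at h1; linarith
      have hlip : LipschitzOnWith (c⁻¹).toNNReal T (Set.Ici v1) := by
        apply LipschitzOnWith.of_dist_le_mul
        intro x hx y hy
        rw [Real.coe_toNNReal _ (by positivity : (0:ℝ) ≤ c⁻¹)]
        rcases le_total y x with hxy | hxy
        · obtain ⟨ha1, ha2⟩ := hkey x hx y hy hxy
          rw [Real.dist_eq, Real.dist_eq, abs_sub_comm, abs_of_nonneg (by linarith),
            abs_of_nonneg (by linarith)]
          linarith
        · obtain ⟨ha1, ha2⟩ := hkey y hy x hx hxy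
          rw [Real.dist_eq, Real.dist_eq, abs_of_nonneg (by linarith),
            abs_sub_comm, abs_of_nonneg (by linarith)]
          linarith
      exact hlip.continuousOn.mono (fun x hx => hx.1)
    obtain ⟨v, hvmem, hvT⟩ := intermediate_value_Icc' hv12 hTcont ⟨hn.le, hTv1⟩
    have hvv : vbar < v := lt_of_lt_of_le hv1v hvmem.1
    refine ⟨v, ⟨hvv, hvT⟩, ?_⟩
    rintro v' ⟨hv'1, hv'2⟩
    exact hanti.injOn (Set.mem_Ioi.2 hv'1) (Set.mem_Ioi.2 hvv) (by rw [hvT]; exact hv'2)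
  · -- part (ii)
    have hTb : 0 < T b := by
      have h1 := hsplit b (b+1) hbv (by linarith)
      have h2 := hchunkpos b (b+1) hbv (by linarith)
      have h3 := hTnn (b+1) (by linarith)
      linarith
    refine ⟨(b - vbar) * Real.exp (m * T b), m, T b, ?_, hmpos, hTb, ?_⟩
    · have := Real.exp_pos (m * T b); nlinarith [sub_pos.2 hbv]
    intro t ht v hv hTv
    have hTveq : T v = t := hTv
    have hvb : v ≤ b := by
      by_contra hc
      push_neg at hc
      have := hanti (Set.mem_Ioi.2 hbv) (Set.mem_Ioi.2 hv) hc
      rw [hTveq] at this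
      linarith
    refine ⟨by linarith, ?_⟩
    have h1 := hup_int v hv hvb
    rw [hTveq] at h1
    have h3 : m * (t - T b) ≤ m * (m⁻¹ * (Real.log (b - vbar) - Real.log (v - vbar))) :=
      mul_le_mul_of_nonneg_left (by linarith) hmpos.le
    rw [mul_inv_cancel_left₀ (ne_of_gt hmpos)] at h3
    have h2 : Real.log (v - vbar) ≤ Real.log (b - vbar) - m * (t - T b) := by linarith
    calc v - vbar = Real.exp (Real.log (v - vbar)) := (Real.exp_log (by linarith)).symm
      _ ≤ Real.exp (Real.log (b - vbar) - m * (t - T b)) := Real.exp_le_exp.2 h2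
      _ = (b - vbar) * Real.exp (m * T b) * Real.exp (-m * t) := by
          rw [show Real.log (b - vbar) - m * (t - T b)
            = Real.log (b - vbar) + (m * T b + -m * t) by ring,
            Real.exp_add, Real.exp_add, Real.exp_log (by linarith : (0:ℝ) < b - vbar)]
          ring
end
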